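/- Every tree T on n ≥ 3 vertices satisfies c(T) ≤ (n−1)/3, where c(T) is the minimum cardinality of a set S ⊆ V(T) with f_T(S) = P(T), and f_T(S) = |E_T(S)| − 2|S| + 1. -/

import Mathlib

open Matrix

/-- `s` induces a path in `G` (possibly a one-vertex or empty path). -/
def IsPathSet {V : Type*} [Fintype V] [DecidableEq V] (G : SimpleGraph V) (s : Finset V) : Prop :=
  ∃ m : ℕ, Nonempty ((SimpleGraph.induce (↑s : Set V) G) ≃g SimpleGraph.pathGraph m)

/-- The path cover number: the minimum number of vertex-disjoint induced paths
covering all vertices of `G`. -/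
noncomputable def pathCoverNumber {V : Type*} [Fintype V] [DecidableEq V]
    (G : SimpleGraph V) : ℕ :=
  sInf {p | ∃ P : Finset (Finset V), P.card = p ∧ (∀ s ∈ P, IsPathSet G s) ∧
    ∀ v : V, ∃! s, s ∈ P ∧ v ∈ s}

/-- The set of edges of `G` incident to at least one vertex of `S`. -/
def ETset {n : ℕ} (G : SimpleGraph (Fin n)) (S : Finset (Fin n)) : Set (Sym2 (Fin n)) :=
  {e ∈ G.edgeSet | ∃ v ∈ S, v ∈ e}

/-- f_G(S) = |E_G(S)| − 2|S| + 1. -/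
noncomputable def fT {n : ℕ} (G : SimpleGraph (Fin n)) (S : Finset (Fin n)) : ℤ :=
  ((ETset G S).ncard : ℤ) - 2 * S.card + 1

/-- c(T): the minimum size of an optimal set, i.e. a set S with f_T(S) = P(T). -/
noncomputable def cT {n : ℕ} (T : SimpleGraph (Fin n)) : ℕ :=
  sInf {k | ∃ S : Finset (Fin n), S.card = k ∧ fT T S = (pathCoverNumber T : ℤ)}

open SimpleGraph

open Classical in
/-- Finset version of `ETset`. -/
noncomputable def EF {n : ℕ} (G : SimpleGraph (Fin n)) (S : Finset (Fin n)) :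
    Finset (Sym2 (Fin n)) :=
  G.edgeFinset.filter (fun e => ∃ v ∈ S, v ∈ e)

lemma ETset_eq_coe_EF {n : ℕ} (G : SimpleGraph (Fin n)) (S : Finset (Fin n)) :
    ETset G S = ↑(EF G S) := by
  classical
  ext e
  simp [ETset, EF, SimpleGraph.mem_edgeFinset]

lemma fT_eq {n : ℕ} (G : SimpleGraph (Fin n)) (S : Finset (Fin n)) :
    fT G S = ((EF G S).card : ℤ) - 2 * S.card + 1 := by
  rw [fT, ETset_eq_coe_EF, Set.ncard_coe_finset]

/-- singleton sets are path sets -/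
lemma isPathSet_singleton {V : Type*} [Fintype V] [DecidableEq V] (G : SimpleGraph V) (v : V) :
    IsPathSet G ({v} : Finset V) := by
  refine ⟨1, ⟨⟨⟨fun _ => 0, fun _ => ⟨v, by simp⟩, ?_, ?_⟩, ?_⟩⟩⟩
  · rintro ⟨x, hx⟩
    simp only [Finset.coe_singleton, Set.mem_singleton_iff] at hx
    simp [hx]
  · intro x
    exact Subsingleton.elim _ _
  · rintro ⟨x, hx⟩ ⟨y, hy⟩
    simp only [Finset.coe_singleton, Set.mem_singleton_iff] at hx hy
    subst hx; subst hy
    simp [SimpleGraph.pathGraph_adj]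

lemma pcn_set_nonempty {V : Type*} [Fintype V] [DecidableEq V] (G : SimpleGraph V) :
    {p | ∃ P : Finset (Finset V), P.card = p ∧ (∀ s ∈ P, IsPathSet G s) ∧
      ∀ v : V, ∃! s, s ∈ P ∧ v ∈ s}.Nonempty := by
  refine ⟨(Finset.univ.image fun v : V => ({v} : Finset V)).card,
    Finset.univ.image fun v : V => ({v} : Finset V), rfl, ?_, ?_⟩
  · intro s hs
    simp only [Finset.mem_image] at hs
    obtain ⟨v, _, rfl⟩ := hs
    exact isPathSet_singleton G v
  · intro v
    refine ⟨{v}, ⟨Finset.mem_image_of_mem _ (Finset.mem_univ v), by simp⟩, ?_⟩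
    rintro s ⟨hs, hvs⟩
    simp only [Finset.mem_image] at hs
    obtain ⟨w, _, rfl⟩ := hs
    simp only [Finset.mem_singleton] at hvs
    subst hvs; rfl

lemma pathGraph_card_edge (m : ℕ) [Fintype (pathGraph m).edgeSet] :
    m ≤ (pathGraph m).edgeFinset.card + 1 := by
  classical
  rcases Nat.eq_zero_or_pos m with rfl | hm
  · omega
  obtain ⟨k, rfl⟩ : ∃ k, m = k + 1 := ⟨m - 1, by omega⟩
  have h : k ≤ (pathGraph (k+1)).edgeFinset.card := by
    have := Finset.card_le_card_of_injOn
      (f := fun i : ℕ => Sym2.mk (⟨min i k, by omega⟩ : Fin (k+1)) (⟨min (i+1) k, by omega⟩ : Fin (k+1)))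
      (s := Finset.range k) (t := (pathGraph (k+1)).edgeFinset) ?_ ?_
    · simpa using this
    · intro i hi
      simp only [Finset.mem_coe, Finset.mem_range] at hi
      rw [Finset.mem_coe, SimpleGraph.mem_edgeFinset, SimpleGraph.mem_edgeSet, pathGraph_adj]
      left
      simp only [Fin.val_mk]
      omega
    · intro i hi j hj hij
      simp only [Finset.mem_coe, Finset.mem_range] at hi hj
      rw [Sym2.eq_iff] at hij
      rcases hij with ⟨h1, h2⟩ | ⟨h1, h2⟩ <;>
        · have e1 := congrArg Fin.val h1
          have e2 := congrArg Fin.val h2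
          simp only [Fin.val_mk] at e1 e2
          omega
  omega

lemma card_induced_edges {n : ℕ} (T : SimpleGraph (Fin n)) (s : Finset (Fin n))
    [Fintype (T.induce (↑s : Set (Fin n))).edgeSet]
    [DecidablePred (fun e : Sym2 (Fin n) => ∀ x ∈ e, x ∈ s)]
    [Fintype T.edgeSet] :
    (T.induce (↑s : Set (Fin n))).edgeFinset.card
      = (T.edgeFinset.filter (fun e => ∀ x ∈ e, x ∈ s)).card := by
  classical
  apply Finset.card_bij (fun e _ => Sym2.map Subtype.val e)
  · intro e he
    induction e with
    | _ a b =>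
      rw [SimpleGraph.mem_edgeFinset, SimpleGraph.mem_edgeSet] at he
      simp only [comap_adj, Function.Embedding.coe_subtype] at he
      rw [Finset.mem_filter, SimpleGraph.mem_edgeFinset, Sym2.map_pair_eq,
        SimpleGraph.mem_edgeSet]
      refine ⟨he, ?_⟩
      intro x hx
      rw [Sym2.mem_iff] at hx
      rcases hx with rfl | rfl
      · exact Finset.mem_coe.mp a.2
      · exact Finset.mem_coe.mp b.2
  · intro e₁ _ e₂ _ h
    exact Sym2.map.injective Subtype.val_injective h
  · intro e he
    rw [Finset.mem_filter, SimpleGraph.mem_edgeFinset] at he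
    obtain ⟨he1, he2⟩ := he
    induction e with
    | _ a b =>
      have ha : a ∈ s := he2 a (by simp)
      have hb : b ∈ s := he2 b (by simp)
      refine ⟨Sym2.mk (⟨a, ha⟩ : (↑s : Set (Fin n))) (⟨b, hb⟩ : (↑s : Set (Fin n))), ?_, by simp⟩
      rw [SimpleGraph.mem_edgeFinset, SimpleGraph.mem_edgeSet]
      simp only [comap_adj, Function.Embedding.coe_subtype]
      exact (SimpleGraph.mem_edgeSet T).mp he1

lemma pathSet_card_eq {n : ℕ} {T : SimpleGraph (Fin n)} {s : Finset (Fin n)} {m : ℕ}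
    (φ : (T.induce (↑s : Set (Fin n))) ≃g pathGraph m) : s.card = m := by
  have := Fintype.card_congr φ.toEquiv
  simpa using this

lemma pathSet_nbhd_le_two {n : ℕ} (T : SimpleGraph (Fin n)) (s : Finset (Fin n))
    (h : IsPathSet T s) (v : Fin n) (hv : v ∈ s)
    [DecidablePred (fun u => T.Adj v u)] :
    (s.filter (fun u => T.Adj v u)).card ≤ 2 := by
  classical
  obtain ⟨m, ⟨φ⟩⟩ := h
  set i : Fin m := φ ⟨v, Finset.mem_coe.mpr hv⟩ with hi
  have := Finset.card_le_card_of_injOn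
    (f := fun u : Fin n => if h : u ∈ s then ((φ ⟨u, Finset.mem_coe.mpr h⟩ : Fin m) : ℕ) else 0)
    (s := s.filter (fun u => T.Adj v u)) (t := {(i : ℕ) + 1, (i : ℕ) - 1}) ?_ ?_
  · calc (s.filter (fun u => T.Adj v u)).card ≤ _ := this
      _ ≤ 2 := by
        apply le_trans (Finset.card_insert_le _ _)
        simp
  · intro u hu
    rw [Finset.mem_coe, Finset.mem_filter] at hu
    obtain ⟨hus, hadj⟩ := hu
    simp only [dif_pos hus]
    have hadj' : (T.induce (↑s : Set (Fin n))).Adj ⟨v, Finset.mem_coe.mpr hv⟩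
        ⟨u, Finset.mem_coe.mpr hus⟩ := by
      simp only [comap_adj, Function.Embedding.coe_subtype]
      exact hadj
    have hpg : (pathGraph m).Adj i (φ ⟨u, Finset.mem_coe.mpr hus⟩) := by
      rw [hi]
      exact φ.map_adj_iff.mpr hadj'
    rw [pathGraph_adj] at hpg
    simp only [Finset.mem_coe, Finset.mem_insert, Finset.mem_singleton]
    omega
  · intro u₁ h₁ u₂ h₂ hf
    simp only [Finset.coe_filter, Set.mem_setOf_eq] at h₁ h₂
    simp only [dif_pos h₁.1, dif_pos h₂.1] at hf
    have := φ.injective (Fin.val_injective hf)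
    exact congrArg Subtype.val this

lemma fT_le_pcn {n : ℕ} (T : SimpleGraph (Fin n)) (hT : T.IsTree) (S : Finset (Fin n)) :
    fT T S ≤ (pathCoverNumber T : ℤ) := by
  classical
  have hne := pcn_set_nonempty T
  have hmem : pathCoverNumber T ∈ {p | ∃ P : Finset (Finset (Fin n)), P.card = p ∧
      (∀ s ∈ P, IsPathSet T s) ∧ ∀ v : Fin n, ∃! s, s ∈ P ∧ v ∈ s} := Nat.sInf_mem hne
  obtain ⟨P, hPcard, hPpath, hPpart⟩ := hmem
  have hn1 : 1 ≤ n := by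
    have hne' : Nonempty (Fin n) := hT.isConnected.nonempty
    exact Fin.pos_iff_nonempty.mpr hne'
  -- blocks are pairwise disjoint
  have hdisj : ∀ s ∈ P, ∀ t ∈ P, s ≠ t → ∀ x, x ∈ s → x ∈ t → False := by
    intro s hs t ht hst x hxs hxt
    obtain ⟨u, _, hu'⟩ := hPpart x
    exact hst ((hu' s ⟨hs, hxs⟩).trans (hu' t ⟨ht, hxt⟩).symm)
  -- within-block edges per block
  set wb : Finset (Fin n) → Finset (Sym2 (Fin n)) :=
    fun s => T.edgeFinset.filter (fun e => ∀ x ∈ e, x ∈ s) with hwbdef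
  have hwb : ∀ s ∈ P, s.card ≤ (wb s).card + 1 := by
    intro s hs
    obtain ⟨m, ⟨φ⟩⟩ := hPpath s hs
    have h1 : s.card = m := pathSet_card_eq φ
    have h2 := card_induced_edges T s
    have h3 := φ.card_edgeFinset_eq
    have h4 := pathGraph_card_edge m
    simp only [hwbdef]
    omega
  -- total vertex count
  have hsum : ∑ s ∈ P, s.card = n := by
    have hbu : P.biUnion id = Finset.univ := by
      ext v
      simp only [Finset.mem_biUnion, id, Finset.mem_univ, iff_true]
      obtain ⟨s, ⟨hs, hvs⟩, _⟩ := hPpart v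
      exact ⟨s, hs, hvs⟩
    have hcb := Finset.card_biUnion (t := id) (s := P)
      (fun s hs t ht hst => Finset.disjoint_left.mpr
        (fun x hx hx' => (hdisj s hs t ht hst x hx hx').elim))
    rw [hbu] at hcb
    simp only [Finset.card_univ, Fintype.card_fin] at hcb
    exact hcb.symm
  -- q : edge lies within a block
  set q : Sym2 (Fin n) → Prop := fun e => ∃ s ∈ P, ∀ x ∈ e, x ∈ s with hqdef
  set W : Finset (Sym2 (Fin n)) := T.edgeFinset.filter q with hWdef
  -- wb s are pairwise disjoint subsets of W
  have hwbW : P.biUnion wb ⊆ W := by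
    intro e he
    rw [Finset.mem_biUnion] at he
    obtain ⟨s, hs, hes⟩ := he
    rw [hwbdef] at hes
    rw [Finset.mem_filter] at hes ⊢
    exact ⟨hes.1, s, hs, hes.2⟩
  have hwbdisj : ∀ s ∈ P, ∀ t ∈ P, s ≠ t → Disjoint (wb s) (wb t) := by
    intro s hs t ht hst
    rw [Finset.disjoint_left]
    intro e hes het
    rw [hwbdef, Finset.mem_filter] at hes het
    induction e with
    | _ a b =>
      exact hdisj s hs t ht hst a (hes.2 a (by simp)) (het.2 a (by simp))
  have hW : n ≤ W.card + P.card := by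
    have h1 : ∑ s ∈ P, s.card ≤ ∑ s ∈ P, ((wb s).card + 1) := Finset.sum_le_sum hwb
    have h2 : ∑ s ∈ P, ((wb s).card + 1) = (∑ s ∈ P, (wb s).card) + P.card := by
      rw [Finset.sum_add_distrib, Finset.sum_const, smul_eq_mul, mul_one]
    have h3 : ∑ s ∈ P, (wb s).card = (P.biUnion wb).card := (Finset.card_biUnion hwbdisj).symm
    have h4 : (P.biUnion wb).card ≤ W.card := Finset.card_le_card hwbW
    omega
  -- edge count of the tree
  have hecard : T.edgeFinset.card + 1 = n := by
    have := hT.card_edgeFinset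
    simpa using this
  have hsplit : W.card + (T.edgeFinset.filter (fun e => ¬ q e)).card = T.edgeFinset.card := by
    rw [hWdef]
    exact Finset.card_filter_add_card_filter_not (p := q)
  -- block choice function
  choose bl hbl using hPpart
  -- E(S) split
  have hEFsplit : ((EF T S).filter q).card + ((EF T S).filter (fun e => ¬ q e)).card
      = (EF T S).card := Finset.card_filter_add_card_filter_not (p := q)
  have hcross : ((EF T S).filter (fun e => ¬ q e)).card
      ≤ (T.edgeFinset.filter (fun e => ¬ q e)).card := by
    apply Finset.card_le_card
    apply Finset.monotone_filter_left
    intro e he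
    rw [EF, Finset.mem_filter] at he
    exact he.1
  -- within part bounded by 2|S|
  have hqpart : (EF T S).filter q ⊆
      S.biUnion (fun v => T.edgeFinset.filter (fun e => v ∈ e ∧ ∀ x ∈ e, x ∈ bl v)) := by
    intro e he
    rw [Finset.mem_filter] at he
    obtain ⟨heEF, hq⟩ := he
    rw [EF, Finset.mem_filter] at heEF
    obtain ⟨hedge, v, hvS, hve⟩ := heEF
    obtain ⟨s, hsP, hall⟩ := hq
    have hsbl : s = bl v := (hbl v).2 s ⟨hsP, hall v hve⟩
    rw [Finset.mem_biUnion]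
    exact ⟨v, hvS, Finset.mem_filter.mpr ⟨hedge, hve, hsbl ▸ hall⟩⟩
  have hNv : ∀ v ∈ S,
      (T.edgeFinset.filter (fun e => v ∈ e ∧ ∀ x ∈ e, x ∈ bl v)).card ≤ 2 := by
    intro v hv
    have hb := pathSet_nbhd_le_two T (bl v) (hPpath _ (hbl v).1.1) v (hbl v).1.2
    refine le_trans (Finset.card_le_card_of_injOn
      (f := fun e => if h : v ∈ e then Sym2.Mem.other h else v)
      (t := (bl v).filter (fun u => T.Adj v u)) ?_ ?_) hb
    · intro e he
      rw [Finset.mem_coe, Finset.mem_filter] at he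
      obtain ⟨hedge, hve, hall⟩ := he
      simp only [dif_pos hve]
      rw [Finset.mem_coe, Finset.mem_filter]
      constructor
      · exact hall _ (Sym2.other_mem hve)
      · have hspec := Sym2.other_spec hve
        rw [SimpleGraph.mem_edgeFinset, ← hspec, SimpleGraph.mem_edgeSet] at hedge
        exact hedge
    · intro e₁ h₁ e₂ h₂ hf
      rw [Finset.mem_coe, Finset.mem_filter] at h₁ h₂
      obtain ⟨_, hv1, _⟩ := h₁
      obtain ⟨_, hv2, _⟩ := h₂
      simp only [dif_pos hv1, dif_pos hv2] at hf
      rw [← Sym2.other_spec hv1, ← Sym2.other_spec hv2, hf]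
  have hwithin : ((EF T S).filter q).card ≤ 2 * S.card := by
    calc ((EF T S).filter q).card
        ≤ (S.biUnion (fun v => T.edgeFinset.filter
            (fun e => v ∈ e ∧ ∀ x ∈ e, x ∈ bl v))).card := Finset.card_le_card hqpart
      _ ≤ ∑ v ∈ S, (T.edgeFinset.filter (fun e => v ∈ e ∧ ∀ x ∈ e, x ∈ bl v)).card :=
          Finset.card_biUnion_le
      _ ≤ ∑ v ∈ S, 2 := Finset.sum_le_sum hNv
      _ = 2 * S.card := by rw [Finset.sum_const, smul_eq_mul, mul_comm]
  -- conclude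
  rw [fT_eq, ← hPcard]
  have : (EF T S).card + 1 ≤ 2 * S.card + P.card := by omega
  omega

/-- For a tree on n ≥ 3 vertices, c(T) ≤ (n−1)/3. -/
theorem stmt15 {n : ℕ} (T : SimpleGraph (Fin n)) (hT : T.IsTree) (hn : 3 ≤ n) :
    3 * cT T ≤ n - 1 := by
  classical
  by_cases hA : {k | ∃ S : Finset (Fin n), S.card = k ∧
      fT T S = (pathCoverNumber T : ℤ)}.Nonempty
  · have hmem : cT T ∈ {k | ∃ S : Finset (Fin n), S.card = k ∧
        fT T S = (pathCoverNumber T : ℤ)} := Nat.sInf_mem hA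
    obtain ⟨S, hScard, hSopt⟩ := hmem
    have hmin : ∀ v ∈ S, fT T (S.erase v) ≠ (pathCoverNumber T : ℤ) := by
      intro v hv hcontra
      have hmem' : (S.erase v).card ∈ {k | ∃ S : Finset (Fin n), S.card = k ∧
          fT T S = (pathCoverNumber T : ℤ)} := ⟨S.erase v, rfl, hcontra⟩
      have hle : cT T ≤ (S.erase v).card := Nat.sInf_le hmem'
      have hpos : 0 < cT T := by
        rw [← hScard]
        exact Finset.card_pos.mpr ⟨v, hv⟩
      rw [Finset.card_erase_of_mem hv, hScard] at hle
      omega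
    have key : ∀ v ∈ S, 3 ≤ (EF T S \ EF T (S.erase v)).card := by
      intro v hv
      have h1 : fT T (S.erase v) ≤ (pathCoverNumber T : ℤ) := fT_le_pcn T hT _
      have h2 := hmin v hv
      have hsub : EF T (S.erase v) ⊆ EF T S := by
        intro e he
        rw [EF, Finset.mem_filter] at he
        obtain ⟨h1', u, hu, hue⟩ := he
        rw [EF, Finset.mem_filter]
        exact ⟨h1', u, Finset.mem_of_mem_erase hu, hue⟩
      have hcard := Finset.card_sdiff_of_subset hsub
      have hle' := Finset.card_le_card hsub
      have he1 := fT_eq T S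
      have he2 := fT_eq T (S.erase v)
      have hcerase : (S.erase v).card = S.card - 1 := Finset.card_erase_of_mem hv
      have hSpos : 1 ≤ S.card := Finset.card_pos.mpr ⟨v, hv⟩
      rw [he1] at hSopt
      rw [he2, hcerase] at h1 h2
      have hc1 : ((S.card - 1 : ℕ) : ℤ) = (S.card : ℤ) - 1 := by
        push_cast [hSpos]
        ring
      rw [hc1] at h1 h2
      omega
    have hdisj : ∀ v ∈ S, ∀ w ∈ S, v ≠ w →
        Disjoint (EF T S \ EF T (S.erase v)) (EF T S \ EF T (S.erase w)) := by
      intro v hv w hw hvw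
      rw [Finset.disjoint_left]
      rintro e hev hew
      rw [Finset.mem_sdiff] at hev hew
      obtain ⟨heS, hnev⟩ := hev
      obtain ⟨_, hnew⟩ := hew
      rw [EF, Finset.mem_filter] at heS
      obtain ⟨hedge, u, huS, hue⟩ := heS
      have hmemof : ∀ x, x ∈ S → x ≠ v → e ∈ EF T (S.erase v) → False := fun _ _ _ h => hnev h
      by_cases huv : u = v
      · subst huv
        apply hnew
        rw [EF, Finset.mem_filter]
        exact ⟨hedge, u, Finset.mem_erase.mpr ⟨hvw, hv⟩, hue⟩
      · apply hnev
        rw [EF, Finset.mem_filter]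
        exact ⟨hedge, u, Finset.mem_erase.mpr ⟨huv, huS⟩, hue⟩
    have hsum : ∑ v ∈ S, (EF T S \ EF T (S.erase v)).card ≤ T.edgeFinset.card := by
      rw [← Finset.card_biUnion hdisj]
      apply Finset.card_le_card
      intro e he
      rw [Finset.mem_biUnion] at he
      obtain ⟨v, _, hev⟩ := he
      rw [Finset.mem_sdiff] at hev
      have := hev.1
      rw [EF, Finset.mem_filter] at this
      exact this.1
    have h3S : 3 * S.card ≤ ∑ v ∈ S, (EF T S \ EF T (S.erase v)).card := by
      calc 3 * S.card = ∑ _v ∈ S, 3 := by rw [Finset.sum_const, smul_eq_mul, mul_comm]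
        _ ≤ _ := Finset.sum_le_sum key
    have hecard : T.edgeFinset.card + 1 = n := by
      have := hT.card_edgeFinset
      simpa using this
    omega
  · have h0 : cT T = 0 := by
      rw [cT]
      exact Nat.sInf_eq_zero.mpr (Or.inr (Set.not_nonempty_iff_eq_empty.mp hA))
    rw [h0]
    omega
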